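/- Let P, Q ∈ ℍ and let Σ : ℍ → ℍ be the ℝ-linear map Σ(X) = PX + XQ. Then Σ is not bijective if and only if P and −Q are similar quaternions, i.e. Re(P) = Re(−Q) and |P| = |−Q|. -/

import Mathlib

open Quaternion

private noncomputable def sylC (P Q : Quaternion ℝ) : Quaternion ℝ :=
  P * P + ((2 * Q.re : ℝ) : Quaternion ℝ) * P + ((Quaternion.normSq Q : ℝ) : Quaternion ℝ)

private lemma syl_key1 (P Q X : Quaternion ℝ) :
    P * (P * X + X * Q) + (P * X + X * Q) * star Q = sylC P Q * X := by
  ext <;>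
    simp only [sylC, Quaternion.normSq_def', Quaternion.re_add, Quaternion.imI_add,
      Quaternion.imJ_add, Quaternion.imK_add, Quaternion.re_mul, Quaternion.imI_mul,
      Quaternion.imJ_mul, Quaternion.imK_mul, Quaternion.re_coe, Quaternion.imI_coe,
      Quaternion.imJ_coe, Quaternion.imK_coe, Quaternion.re_star, Quaternion.imI_star,
      Quaternion.imJ_star, Quaternion.imK_star] <;>
    ring

private lemma syl_key2 (P Q X : Quaternion ℝ) :
    P * (P * X + X * star Q) + (P * X + X * star Q) * Q = sylC P Q * X := by
  ext <;>
    simp only [sylC, Quaternion.normSq_def', Quaternion.re_add, Quaternion.imI_add,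
      Quaternion.imJ_add, Quaternion.imK_add, Quaternion.re_mul, Quaternion.imI_mul,
      Quaternion.imJ_mul, Quaternion.imK_mul, Quaternion.re_coe, Quaternion.imI_coe,
      Quaternion.imJ_coe, Quaternion.imK_coe, Quaternion.re_star, Quaternion.imI_star,
      Quaternion.imJ_star, Quaternion.imK_star] <;>
    ring

private lemma sylC_eq_zero_iff (P Q : Quaternion ℝ) :
    sylC P Q = 0 ↔ (P.re = -Q.re ∧ ‖P‖ = ‖Q‖) := by
  have hnorm : ‖P‖ = ‖Q‖ ↔ Quaternion.normSq P = Quaternion.normSq Q := by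
    rw [Quaternion.normSq_eq_norm_mul_self, Quaternion.normSq_eq_norm_mul_self]
    constructor
    · intro h; rw [h]
    · intro h
      have h1 : ‖P‖ ≤ ‖Q‖ := by nlinarith [norm_nonneg P, norm_nonneg Q]
      have h2 : ‖Q‖ ≤ ‖P‖ := by nlinarith [norm_nonneg P, norm_nonneg Q]
      linarith
  rw [hnorm]
  rw [Quaternion.ext_iff]
  simp only [sylC, Quaternion.normSq_def', Quaternion.re_add, Quaternion.imI_add,
    Quaternion.imJ_add, Quaternion.imK_add, Quaternion.re_mul, Quaternion.imI_mul,
    Quaternion.imJ_mul, Quaternion.imK_mul, Quaternion.re_coe, Quaternion.imI_coe,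
    Quaternion.imJ_coe, Quaternion.imK_coe, Quaternion.re_zero, Quaternion.imI_zero,
    Quaternion.imJ_zero, Quaternion.imK_zero]
  constructor
  · rintro ⟨h1, h2, h3, h4⟩
    have e1 : (P.re + Q.re) * P.imI = 0 := by linear_combination h2 / 2
    have e2 : (P.re + Q.re) * P.imJ = 0 := by linear_combination h3 / 2
    have e3 : (P.re + Q.re) * P.imK = 0 := by linear_combination h4 / 2
    have key : (P.re + Q.re)^2 * (P.re + Q.re)^2
        + ((P.re + Q.re) * Q.imI)^2 + ((P.re + Q.re) * Q.imJ)^2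
        + ((P.re + Q.re) * Q.imK)^2 = 0 := by
      linear_combination (P.re + Q.re)^2 * h1 + ((P.re + Q.re) * P.imI) * e1
        + ((P.re + Q.re) * P.imJ) * e2 + ((P.re + Q.re) * P.imK) * e3
    have h40 : (P.re + Q.re) ^ 2 * (P.re + Q.re) ^ 2 = 0 := by
      nlinarith [sq_nonneg ((P.re + Q.re) * Q.imI), sq_nonneg ((P.re + Q.re) * Q.imJ),
        sq_nonneg ((P.re + Q.re) * Q.imK), sq_nonneg ((P.re + Q.re)^2)]
    have hs : P.re + Q.re = 0 := by
      have h20 : (P.re + Q.re) ^ 2 = 0 := by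
        have : ((P.re + Q.re) ^ 2) * ((P.re + Q.re) ^ 2) = 0 := h40
        exact mul_self_eq_zero.mp this
      exact sq_eq_zero_iff.mp h20
    refine ⟨by linarith, ?_⟩
    linear_combination 2 * P.re * hs - h1
  · rintro ⟨h1, h2⟩
    refine ⟨?_, ?_, ?_, ?_⟩
    · linear_combination (2 * P.re) * h1 - h2
    · linear_combination (2 * P.imI) * h1
    · linear_combination (2 * P.imJ) * h1
    · linear_combination (2 * P.imK) * h1

private lemma syl_bij_of_ne (P Q : Quaternion ℝ) (hc : sylC P Q ≠ 0) :
    Function.Bijective (fun X : Quaternion ℝ => P * X + X * Q) := by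
  constructor
  · intro a b hab
    simp only at hab
    have h1 := syl_key1 P Q a
    have h2 := syl_key1 P Q b
    rw [hab] at h1
    have : sylC P Q * a = sylC P Q * b := by rw [← h1, ← h2]
    exact mul_left_cancel₀ hc this
  · intro Y
    refine ⟨P * ((sylC P Q)⁻¹ * Y) + ((sylC P Q)⁻¹ * Y) * star Q, ?_⟩
    simp only
    rw [syl_key2 P Q ((sylC P Q)⁻¹ * Y), ← mul_assoc, mul_inv_cancel₀ hc, one_mul]

private lemma syl_not_bij_of_eq (P Q : Quaternion ℝ) (hc : sylC P Q = 0) :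
    ¬ Function.Bijective (fun X : Quaternion ℝ => P * X + X * Q) := by
  intro hbij
  have hT' : ∀ X : Quaternion ℝ, P * X + X * star Q = 0 := by
    intro X
    have h0 : (fun X : Quaternion ℝ => P * X + X * Q) (P * X + X * star Q)
        = (fun X : Quaternion ℝ => P * X + X * Q) 0 := by
      simp only [mul_zero, zero_mul, add_zero]
      rw [syl_key2 P Q X, hc, zero_mul]
    exact hbij.injective h0
  have hstar : star Q = -P := by
    have h1 := hT' 1
    rw [mul_one, one_mul] at h1
    rw [eq_neg_iff_add_eq_zero, add_comm]
    exact h1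
  have hcomm : ∀ X : Quaternion ℝ, P * X = X * P := by
    intro X
    have h := hT' X
    rw [hstar, mul_neg] at h
    have h' : P * X - X * P = 0 := by rw [sub_eq_add_neg]; exact h
    exact sub_eq_zero.mp h' 
  have hI := hcomm ((Quaternion.equivProd ℝ).symm (0,1,0,0))
  have hJ := hcomm ((Quaternion.equivProd ℝ).symm (0,0,1,0))
  have h3 : P.imJ = 0 := by
    have := congrArg (fun x : Quaternion ℝ => x.imK) hI
    simp [Quaternion.imK_mul] at this
    linarith
  have h4 : P.imK = 0 := by
    have := congrArg (fun x : Quaternion ℝ => x.imJ) hI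
    simp [Quaternion.imJ_mul] at this
    linarith
  have h2 : P.imI = 0 := by
    have := congrArg (fun x : Quaternion ℝ => x.imK) hJ
    simp [Quaternion.imK_mul] at this
    linarith
  have hQ : Q = -P := by
    have : star (star Q) = star (-P) := by rw [hstar]
    rw [star_star] at this
    rw [this]
    ext <;> simp [h2, h3, h4]
  have h10 : (fun X : Quaternion ℝ => P * X + X * Q) 1
      = (fun X : Quaternion ℝ => P * X + X * Q) 0 := by
    simp [hQ]
  exact one_ne_zero (hbij.injective h10)

theorem stmt_2 (P Q : Quaternion ℝ) :
    ¬ Function.Bijective (fun X : Quaternion ℝ => P * X + X * Q) ↔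
      (P.re = (-Q).re ∧ ‖P‖ = ‖-Q‖) := by
  have h : (P.re = (-Q).re ∧ ‖P‖ = ‖-Q‖) ↔ (P.re = -Q.re ∧ ‖P‖ = ‖Q‖) := by
    rw [Quaternion.re_neg, norm_neg]
  rw [h, ← sylC_eq_zero_iff]
  constructor
  · intro hnb
    by_contra hc
    exact hnb (syl_bij_of_ne P Q hc)
  · exact syl_not_bij_of_eq P Q
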